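/- arXiv:2502.19952 — 2 statements merged into one kernel-verified Lean document; each statement's English description precedes it below -/
import Mathlib

section
/- Let A and B be finite sets with A ∪ B nonempty, let π be a uniformly random permutation (bijection) of a finite ground set U containing A ∪ B, and define H(S) = min over x ∈ S of π(x) (viewing π as an injection into a linearly ordered set). Then P[H(A) = H(B)] = |A ∩ B| / |A ∪ B|. -/
open Finset

section MinhashAux

variable {n : ℕ}

/-- The argmin of `π` over `A ∪ B`. -/
noncomputable def minhashArg (A B : Finset (Fin n)) (h : (A ∪ B).Nonempty)
    (π : Equiv.Perm (Fin n)) : Fin n :=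
  π.symm (((A ∪ B).image π).min' (h.image π))

lemma minhash_min'_congr {α : Type*} [LinearOrder α] {s t : Finset α} (hst : s = t)
    (hs : s.Nonempty) : s.min' hs = t.min' (hst ▸ hs) := by subst hst; rfl

lemma minhash_sub_min (A B : Finset (Fin n)) (h : (A ∪ B).Nonempty)
    (π : Equiv.Perm (Fin n)) {S : Finset (Fin n)} (hS : S ⊆ A ∪ B) :
    (S.image π).min = (((A ∪ B).image π).min' (h.image π) : Fin n) ↔
      minhashArg A B h π ∈ S := by
  set m := ((A ∪ B).image π).min' (h.image π) with hm
  constructor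
  · intro hmin
    obtain ⟨a, ha, hpa⟩ := Finset.mem_image.mp (Finset.mem_of_min hmin)
    have : minhashArg A B h π = a := by
      rw [minhashArg, ← hm, ← hpa, Equiv.symm_apply_apply]
    rw [this]; exact ha
  · intro hg
    have hSne : (S.image π).Nonempty := ⟨π (minhashArg A B h π), Finset.mem_image_of_mem _ hg⟩
    have h1 : (S.image π).min' hSne ≤ m := by
      apply Finset.min'_le
      have : π (minhashArg A B h π) = m := by
        rw [minhashArg, ← hm, Equiv.apply_symm_apply]
      rw [← this]
      exact Finset.mem_image_of_mem _ hg
    have h2 : m ≤ (S.image π).min' hSne := by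
      apply Finset.min'_le
      exact Finset.image_subset_image hS (Finset.min'_mem _ _)
    have heq : (S.image π).min' hSne = m := le_antisymm h1 h2
    rw [← Finset.coe_min' hSne, heq]

/-- Key characterization: the min collision happens iff the argmin is in `A ∩ B`. -/
lemma minhash_key (A B : Finset (Fin n)) (h : (A ∪ B).Nonempty)
    (π : Equiv.Perm (Fin n)) :
    (A.image π).min = (B.image π).min ↔ minhashArg A B h π ∈ A ∩ B := by
  set m := ((A ∪ B).image π).min' (h.image π) with hm
  have hunion : ((A ∪ B).image π).min = (m : WithTop (Fin n)) :=
    (Finset.coe_min' _).symm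
  have himg : (A ∪ B).image π = A.image π ∪ B.image π := Finset.image_union _ _
  have hAmono : ((A ∪ B).image π).min ≤ (A.image π).min :=
    Finset.min_mono (Finset.image_subset_image Finset.subset_union_left)
  have hBmono : ((A ∪ B).image π).min ≤ (B.image π).min :=
    Finset.min_mono (Finset.image_subset_image Finset.subset_union_right)
  have hmem : m ∈ (A ∪ B).image π := Finset.min'_mem _ _
  rw [himg, Finset.mem_union] at hmem
  constructor
  · intro hAB
    have hA : (A.image π).min = (m : WithTop (Fin n)) := by
      rcases hmem with hA' | hB'
      · exact le_antisymm (Finset.min_le hA') (hunion ▸ hAmono)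
      · exact le_antisymm (hAB ▸ Finset.min_le hB') (hunion ▸ hAmono)
    have hB : (B.image π).min = (m : WithTop (Fin n)) := by rw [← hAB]; exact hA
    rw [Finset.mem_inter]
    exact ⟨(minhash_sub_min A B h π Finset.subset_union_left).mp hA,
      (minhash_sub_min A B h π Finset.subset_union_right).mp hB⟩
  · intro hg
    rw [Finset.mem_inter] at hg
    rw [(minhash_sub_min A B h π Finset.subset_union_left).mpr hg.1,
      (minhash_sub_min A B h π Finset.subset_union_right).mpr hg.2]

lemma minhash_swap_image (A B : Finset (Fin n)) {x y : Fin n}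
    (hx : x ∈ A ∪ B) (hy : y ∈ A ∪ B) :
    (A ∪ B).image (Equiv.swap x y) = A ∪ B := by
  apply Finset.eq_of_subset_of_card_le
  · intro a ha
    obtain ⟨b, hb, rfl⟩ := Finset.mem_image.mp ha
    rcases eq_or_ne b x with rfl | hbx
    · rwa [Equiv.swap_apply_left]
    rcases eq_or_ne b y with rfl | hby
    · rwa [Equiv.swap_apply_right]
    · rwa [Equiv.swap_apply_of_ne_of_ne hbx hby]
  · rw [Finset.card_image_of_injective _ (Equiv.injective _)]

lemma minhash_arg_mul_swap (A B : Finset (Fin n)) (h : (A ∪ B).Nonempty)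
    (π : Equiv.Perm (Fin n)) {x y : Fin n} (hx : x ∈ A ∪ B) (hy : y ∈ A ∪ B) :
    minhashArg A B h (π * Equiv.swap x y) = Equiv.swap x y (minhashArg A B h π) := by
  have himg : (A ∪ B).image (⇑(π * Equiv.swap x y)) = (A ∪ B).image π := by
    rw [show ⇑(π * Equiv.swap x y) = ⇑π ∘ ⇑(Equiv.swap x y) from rfl,
      ← Finset.image_image, minhash_swap_image A B hx hy]
  have hm : ((A ∪ B).image (⇑(π * Equiv.swap x y))).min'
      ((h.image _)) = ((A ∪ B).image π).min' (h.image π) :=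
    minhash_min'_congr himg _
  rw [minhashArg, minhashArg, hm, Equiv.Perm.mul_def, Equiv.symm_trans_apply,
    Equiv.symm_swap]

/-- All fibers of the argmin over points of `A ∪ B` have the same size. -/
lemma minhash_fiber_card (A B : Finset (Fin n)) (h : (A ∪ B).Nonempty)
    {x y : Fin n} (hx : x ∈ A ∪ B) (hy : y ∈ A ∪ B) :
    (Finset.univ.filter (fun π : Equiv.Perm (Fin n) => minhashArg A B h π = x)).card =
      (Finset.univ.filter (fun π : Equiv.Perm (Fin n) => minhashArg A B h π = y)).card := by
  apply Finset.card_nbij' (fun π => π * Equiv.swap x y) (fun π => π * Equiv.swap x y)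
  · intro π hπ
    simp only [Finset.mem_coe, Finset.mem_filter, Finset.mem_univ, true_and] at hπ ⊢
    rw [minhash_arg_mul_swap A B h π hx hy, hπ, Equiv.swap_apply_left]
  · intro π hπ
    simp only [Finset.mem_coe, Finset.mem_filter, Finset.mem_univ, true_and] at hπ ⊢
    rw [minhash_arg_mul_swap A B h π hx hy, hπ, Equiv.swap_apply_right]
  · intro π _
    dsimp only
    rw [mul_assoc, Equiv.swap_mul_self, mul_one]
  · intro π _
    dsimp only
    rw [mul_assoc, Equiv.swap_mul_self, mul_one]

end MinhashAux

/-- MinHash collision probability: for finite sets `A, B ⊆ Fin n` with `A ∪ B` nonempty,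
the probability over a uniformly random permutation `π` of `Fin n` that
`min π(A) = min π(B)` equals the Jaccard similarity `|A ∩ B| / |A ∪ B|`. -/
theorem minhash_collision_probability
    (n : ℕ) (A B : Finset (Fin n)) (h : (A ∪ B).Nonempty) :
    ((Finset.univ.filter
        (fun π : Equiv.Perm (Fin n) => (A.image π).min = (B.image π).min)).card : ℝ)
        / (Fintype.card (Equiv.Perm (Fin n)))
      = ((A ∩ B).card : ℝ) / ((A ∪ B).card : ℝ) := by
  classical
  obtain ⟨x₀, hx₀⟩ := id h
  set g := minhashArg A B h with hg
  set c := (Finset.univ.filter (fun π : Equiv.Perm (Fin n) => g π = x₀)).card with hc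
  -- filter set cardinality
  have hfilter : (Finset.univ.filter
      (fun π : Equiv.Perm (Fin n) => (A.image π).min = (B.image π).min)).card
      = (A ∩ B).card * c := by
    set s := Finset.univ.filter
      (fun π : Equiv.Perm (Fin n) => (A.image π).min = (B.image π).min) with hs
    have hmaps : ∀ π ∈ s, g π ∈ A ∩ B := by
      intro π hπ
      rw [hs, Finset.mem_filter] at hπ
      exact (minhash_key A B h π).mp hπ.2
    rw [Finset.card_eq_sum_card_fiberwise hmaps]
    have : ∀ x ∈ A ∩ B, (s.filter (fun π => g π = x)).card = c := by
      intro x hxAB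
      have hfib : s.filter (fun π => g π = x) =
          Finset.univ.filter (fun π : Equiv.Perm (Fin n) => g π = x) := by
        ext π
        simp only [hs, Finset.mem_filter, Finset.mem_univ, true_and]
        constructor
        · exact fun hp => hp.2
        · intro hp
          refine ⟨?_, hp⟩
          apply (minhash_key A B h π).mpr
          show g π ∈ A ∩ B
          rw [hp]; exact hxAB
      rw [hfib, hc]
      exact minhash_fiber_card A B h
        (Finset.mem_union.mpr (Or.inl (Finset.mem_inter.mp hxAB).1)) hx₀
    rw [Finset.sum_congr rfl this, Finset.sum_const, smul_eq_mul]
  -- total cardinality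
  have htotal : Fintype.card (Equiv.Perm (Fin n)) = (A ∪ B).card * c := by
    rw [← Finset.card_univ]
    have hmaps : ∀ π ∈ (Finset.univ : Finset (Equiv.Perm (Fin n))), g π ∈ A ∪ B := by
      intro π _
      rw [hg, minhashArg]
      obtain ⟨a, ha, hpa⟩ := Finset.mem_image.mp
        (Finset.min'_mem ((A ∪ B).image π) (h.image π))
      rw [← hpa, Equiv.symm_apply_apply]
      exact ha
    rw [Finset.card_eq_sum_card_fiberwise hmaps]
    have : ∀ x ∈ A ∪ B, (Finset.univ.filter (fun π : Equiv.Perm (Fin n) => g π = x)).card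
        = c := fun x hxU => minhash_fiber_card A B h hxU hx₀
    rw [Finset.sum_congr rfl this, Finset.sum_const, smul_eq_mul]
  have hcard_pos : 0 < Fintype.card (Equiv.Perm (Fin n)) := Fintype.card_pos
  have hc0 : (c : ℝ) ≠ 0 := by
    have : c ≠ 0 := by
      intro hcz
      rw [htotal, hcz, mul_zero] at hcard_pos
      exact lt_irrefl 0 hcard_pos
    exact_mod_cast this
  have hU0 : ((A ∪ B).card : ℝ) ≠ 0 := by
    have : (A ∪ B).card ≠ 0 := Finset.card_ne_zero_of_mem hx₀
    exact_mod_cast this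
  rw [hfilter, htotal]
  push_cast
  rw [mul_div_mul_right _ _ hc0]
end

section
/- Let A, B be nonempty finite sets, π a uniformly random permutation of a finite ground set U ⊇ A ∪ B, and let the random variable X be 1 if min π(A) = min π(B) and 0 otherwise. Then E[X] = J(A,B) where J(A,B) = |A ∩ B|/|A ∪ B|; i.e., X is an unbiased estimator of the Jaccard similarity. -/
open Finset

/-- MinHash indicator unbiasedness: for nonempty finite sets `A, B ⊆ Fin n`, the
expectation (over a uniformly random permutation `π`) of the indicator of
`min π(A) = min π(B)` equals the Jaccard similarity `J(A,B) = |A ∩ B| / |A ∪ B|`. -/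
theorem minhash_indicator_unbiased
    (n : ℕ) (A B : Finset (Fin n)) (hA : A.Nonempty) (hB : B.Nonempty) :
    (∑ π : Equiv.Perm (Fin n),
        (if (A.image π).min = (B.image π).min then (1 : ℝ) else 0))
        / (Fintype.card (Equiv.Perm (Fin n)))
      = ((A ∩ B).card : ℝ) / ((A ∪ B).card : ℝ) := by
  classical
  have hU : (A ∪ B).Nonempty := hA.mono subset_union_left
  -- uniqueness of the minimizer
  have uniq : ∀ (π : Equiv.Perm (Fin n)) (x x' : Fin n), x ∈ A ∪ B → x' ∈ A ∪ B →
      (∀ y ∈ A ∪ B, π x ≤ π y) → (∀ y ∈ A ∪ B, π x' ≤ π y) → x = x' := by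
    intro π x x' hx hx' h h'
    exact π.injective (le_antisymm (h x' hx') (h' x hx))
  -- key equivalence: equal mins iff minimizer lies in A ∩ B
  have key : ∀ π : Equiv.Perm (Fin n),
      ((A.image π).min = (B.image π).min) ↔
        ∃ x ∈ A ∩ B, ∀ y ∈ A ∪ B, π x ≤ π y := by
    intro π
    have hAim : (A.image π).Nonempty := hA.image π
    have hBim : (B.image π).Nonempty := hB.image π
    constructor
    · intro h
      have h' : (A.image π).min' hAim = (B.image π).min' hBim := by
        have h2 := h
        rw [← Finset.coe_min' hAim, ← Finset.coe_min' hBim] at h2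
        exact_mod_cast h2
      obtain ⟨a, ha, hav⟩ := Finset.mem_image.1 ((A.image π).min'_mem hAim)
      obtain ⟨b, hb, hbv⟩ := Finset.mem_image.1 ((B.image π).min'_mem hBim)
      have hab : a = b := π.injective (by rw [hav, hbv, h'])
      refine ⟨a, Finset.mem_inter.2 ⟨ha, hab ▸ hb⟩, ?_⟩
      intro y hy
      rcases Finset.mem_union.1 hy with hyA | hyB
      · rw [hav]; exact Finset.min'_le _ _ (Finset.mem_image_of_mem π hyA)
      · rw [hav, h']; exact Finset.min'_le _ _ (Finset.mem_image_of_mem π hyB)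
    · rintro ⟨x, hx, hmin⟩
      obtain ⟨hxA, hxB⟩ := Finset.mem_inter.1 hx
      have h1 : (A.image π).min' hAim = π x :=
        le_antisymm (Finset.min'_le _ _ (Finset.mem_image_of_mem π hxA))
          (Finset.le_min' _ _ _ (by
            rintro y hy
            obtain ⟨a, ha, rfl⟩ := Finset.mem_image.1 hy
            exact hmin a (Finset.mem_union_left _ ha)))
      have h2 : (B.image π).min' hBim = π x :=
        le_antisymm (Finset.min'_le _ _ (Finset.mem_image_of_mem π hxB))
          (Finset.le_min' _ _ _ (by
            rintro y hy
            obtain ⟨a, ha, rfl⟩ := Finset.mem_image.1 hy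
            exact hmin a (Finset.mem_union_right _ ha)))
      rw [← Finset.coe_min' hAim, ← Finset.coe_min' hBim, h1, h2]
  -- counting function
  set N : Fin n → ℕ := fun x => (Finset.univ.filter
      (fun π : Equiv.Perm (Fin n) => ∀ y ∈ A ∪ B, π x ≤ π y)).card with hN
  -- rewrite indicator as a sum over A ∩ B
  have step1 : ∀ π : Equiv.Perm (Fin n),
      (if (A.image π).min = (B.image π).min then (1 : ℝ) else 0)
        = ∑ x ∈ A ∩ B, (if ∀ y ∈ A ∪ B, π x ≤ π y then (1 : ℝ) else 0) := by
    intro π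
    by_cases h : (A.image π).min = (B.image π).min
    · obtain ⟨x₀, hx₀, hmin⟩ := (key π).1 h
      rw [if_pos h]
      rw [Finset.sum_eq_single_of_mem x₀ hx₀, if_pos hmin]
      intro x hx hne
      rw [if_neg]
      intro hmin'
      exact hne (uniq π x x₀ (Finset.mem_union_left _ (Finset.mem_inter.1 hx).1)
        (Finset.mem_union_left _ (Finset.mem_inter.1 hx₀).1) hmin' hmin)
    · rw [if_neg h, Finset.sum_eq_zero]
      intro x hx
      rw [if_neg]
      intro hmin
      exact h ((key π).2 ⟨x, hx, hmin⟩)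
  -- the count N is constant on A ∪ B
  have const : ∀ x ∈ A ∪ B, ∀ x' ∈ A ∪ B, N x = N x' := by
    intro x hx x' hx'
    rw [hN]
    refine Finset.card_nbij' (fun π => π.trans (Equiv.swap (π x) (π x')))
      (fun π => π.trans (Equiv.swap (π x') (π x))) ?_ ?_ ?_ ?_
    · intro π hπ
      simp only [Finset.mem_coe, Finset.mem_filter, Finset.mem_univ, true_and] at hπ ⊢
      intro y hy
      simp only [Equiv.trans_apply]
      rw [Equiv.swap_apply_right]
      by_cases hyx : y = x
      · subst hyx; rw [Equiv.swap_apply_left]; exact hπ x' hx'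
      by_cases hyx' : y = x'
      · subst hyx'; rw [Equiv.swap_apply_right]
      · rw [Equiv.swap_apply_of_ne_of_ne (fun h => hyx (π.injective h))
          (fun h => hyx' (π.injective h))]
        exact hπ y hy
    · intro π hπ
      simp only [Finset.mem_coe, Finset.mem_filter, Finset.mem_univ, true_and] at hπ ⊢
      intro y hy
      simp only [Equiv.trans_apply]
      rw [Equiv.swap_apply_right]
      by_cases hyx : y = x'
      · subst hyx; rw [Equiv.swap_apply_left]; exact hπ x hx
      by_cases hyx' : y = x
      · subst hyx'; rw [Equiv.swap_apply_right]
      · rw [Equiv.swap_apply_of_ne_of_ne (fun h => hyx (π.injective h))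
          (fun h => hyx' (π.injective h))]
        exact hπ y hy
    · intro π hπ
      refine Equiv.ext fun z => ?_
      simp only [Equiv.trans_apply, Equiv.swap_apply_left, Equiv.swap_apply_right,
        Equiv.swap_apply_self]
    · intro π hπ
      refine Equiv.ext fun z => ?_
      simp only [Equiv.trans_apply, Equiv.swap_apply_left, Equiv.swap_apply_right,
        Equiv.swap_apply_self]
  -- total count over A ∪ B
  have total : ∑ x ∈ A ∪ B, N x = Fintype.card (Equiv.Perm (Fin n)) := by
    rw [hN]
    simp only [Finset.card_filter]
    rw [Finset.sum_comm]
    rw [← Finset.card_univ, Finset.card_eq_sum_ones]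
    apply Finset.sum_congr rfl
    intro π _
    obtain ⟨x₀, hx₀, hmin⟩ := Finset.exists_min_image (A ∪ B) π hU
    rw [Finset.sum_eq_single_of_mem x₀ hx₀, if_pos hmin]
    intro x hx hne
    rw [if_neg]
    intro hmin'
    exact hne (uniq π x x₀ hx hx₀ hmin' hmin)
  obtain ⟨x₀, hx₀⟩ := hU
  set c := N x₀ with hc
  have hsumU : (A ∪ B).card * c = Fintype.card (Equiv.Perm (Fin n)) := by
    rw [← total, Finset.sum_congr rfl (fun x hx => const x hx x₀ hx₀),
      Finset.sum_const, smul_eq_mul]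
  have hcpos : (0 : ℝ) < c := by
    have h1 : 0 < (A ∪ B).card * c := hsumU ▸ Fintype.card_pos
    have hc0 : c ≠ 0 := by
      intro h0
      rw [h0, mul_zero] at h1
      exact lt_irrefl 0 h1
    exact_mod_cast Nat.pos_of_ne_zero hc0
  have hnum : ∑ π : Equiv.Perm (Fin n),
      (if (A.image π).min = (B.image π).min then (1 : ℝ) else 0)
        = ((A ∩ B).card : ℝ) * c := by
    rw [Finset.sum_congr rfl (fun π _ => step1 π), Finset.sum_comm]
    have : ∀ x ∈ A ∩ B, (∑ π : Equiv.Perm (Fin n),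
        (if ∀ y ∈ A ∪ B, π x ≤ π y then (1 : ℝ) else 0)) = (c : ℝ) := by
      intro x hx
      rw [Finset.sum_boole]
      congr 1
      exact const x (Finset.mem_union_left _ (Finset.mem_inter.1 hx).1) x₀ hx₀
    rw [Finset.sum_congr rfl this, Finset.sum_const, nsmul_eq_mul]
  rw [hnum, ← hsumU]
  push_cast
  rw [mul_div_mul_right _ _ (ne_of_gt hcpos)]
end
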